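/- arXiv:2508.05493 — 7 statements merged into one kernel-verified Lean document; each statement's English description precedes it below -/
import Mathlib

section
/- Let S and X be n×n real symmetric matrices such that X is positive semidefinite and the largest eigenvalue of X is at most x̄ for some real x̄ ≥ 0. Then the Frobenius inner product ⟨S, X⟩ = tr(S X) is at least x̄ times the sum of the negative eigenvalues of S. -/
open Matrix Finset

lemma psd_diag_nonneg {n : ℕ} {M : Matrix (Fin n) (Fin n) ℝ} (hM : M.PosSemidef) (i : Fin n) :
    0 ≤ M i i := by
  exact hM.diag_nonneg

/-- For real symmetric `S` and PSD `X` with `λ_max(X) ≤ x̄`, `x̄ ≥ 0`,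
the Frobenius inner product `⟨S, X⟩ = tr(S X)` is at least `x̄` times the sum of the
negative eigenvalues of `S`. -/
theorem stmt0 {n : ℕ} (S X : Matrix (Fin n) (Fin n) ℝ)
    (hS : S.IsHermitian) (hX : X.PosSemidef) (xbar : ℝ) (hxbar : 0 ≤ xbar)
    (hXeig : ∀ i, hX.1.eigenvalues i ≤ xbar) :
    xbar * ∑ i ∈ Finset.univ.filter (fun i => hS.eigenvalues i < 0), hS.eigenvalues i
      ≤ (S * X).trace := by
  classical
  set U : Matrix (Fin n) (Fin n) ℝ := (hS.eigenvectorUnitary : Matrix (Fin n) (Fin n) ℝ)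
  set M : Matrix (Fin n) (Fin n) ℝ := star U * X * U with hMdef
  have hUstar : star U * U = 1 := (Matrix.mem_unitaryGroup_iff').mp hS.eigenvectorUnitary.2
  have hUU : U * star U = 1 := (Matrix.mem_unitaryGroup_iff).mp hS.eigenvectorUnitary.2
  -- M is PSD
  have hMpsd : M.PosSemidef := by
    simpa [hMdef, Matrix.star_eq_conjTranspose] using hX.conjTranspose_mul_mul_same U
  -- x̄ • 1 - X is PSD
  have hY : (xbar • (1 : Matrix (Fin n) (Fin n) ℝ) - X).PosSemidef := by
    set V : Matrix (Fin n) (Fin n) ℝ := (hX.1.eigenvectorUnitary : Matrix (Fin n) (Fin n) ℝ)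
    have hVV : V * star V = 1 := (Matrix.mem_unitaryGroup_iff).mp hX.1.eigenvectorUnitary.2
    have hXspec := hX.1.spectral_theorem
    rw [Unitary.conjStarAlgAut_apply] at hXspec
    have key : xbar • (1 : Matrix (Fin n) (Fin n) ℝ) - X
        = V * (Matrix.diagonal (fun i => xbar - hX.1.eigenvalues i)) * star V := by
      have : Matrix.diagonal (fun i => xbar - hX.1.eigenvalues i)
          = xbar • (1 : Matrix (Fin n) (Fin n) ℝ)
            - Matrix.diagonal (RCLike.ofReal ∘ hX.1.eigenvalues) := by
        ext i j
        by_cases h : i = j <;> simp [Matrix.diagonal, h, Matrix.one_apply]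
      rw [this, Matrix.mul_sub, Matrix.sub_mul, ← hXspec]
      congr 1
      rw [Matrix.mul_smul, Matrix.mul_one, Matrix.smul_mul, hVV]
    rw [key]
    have hdiag : (Matrix.diagonal (fun i => xbar - hX.1.eigenvalues i)).PosSemidef :=
      Matrix.PosSemidef.diagonal (fun i => sub_nonneg.mpr (hXeig i))
    simpa [Matrix.star_eq_conjTranspose] using hdiag.mul_mul_conjTranspose_same V
  -- diagonal entries of M are in [0, x̄]
  have hM0 : ∀ i, 0 ≤ M i i := fun i => psd_diag_nonneg hMpsd i
  have hMx : ∀ i, M i i ≤ xbar := by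
    intro i
    have h2 : (star U * (xbar • (1 : Matrix (Fin n) (Fin n) ℝ) - X) * U).PosSemidef := by
      simpa [Matrix.star_eq_conjTranspose] using hY.conjTranspose_mul_mul_same U
    have h3 : star U * (xbar • (1 : Matrix (Fin n) (Fin n) ℝ) - X) * U
        = xbar • (1 : Matrix (Fin n) (Fin n) ℝ) - M := by
      rw [Matrix.mul_sub, Matrix.sub_mul, hMdef]
      congr 1
      rw [Matrix.mul_smul, Matrix.mul_one, Matrix.smul_mul, hUstar]
    rw [h3] at h2
    have := psd_diag_nonneg h2 i
    simp only [Matrix.sub_apply, Matrix.smul_apply, Matrix.one_apply_eq, smul_eq_mul,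
      mul_one] at this
    linarith
  -- trace identity
  have htr : (S * X).trace = ∑ i, hS.eigenvalues i * M i i := by
    conv_lhs => rw [hS.spectral_theorem, Unitary.conjStarAlgAut_apply]
    rw [Matrix.mul_assoc, Matrix.mul_assoc, Matrix.trace_mul_comm, Matrix.mul_assoc]
    have : (Matrix.diagonal (RCLike.ofReal ∘ hS.eigenvalues) * (star U * X * U)).trace
        = (Matrix.diagonal (RCLike.ofReal ∘ hS.eigenvalues) * M).trace := rfl
    rw [this, Matrix.trace]
    simp [Matrix.diagonal_mul, Matrix.diag]
  rw [htr]
  rw [Finset.mul_sum]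
  have hsplit : ∑ i, hS.eigenvalues i * M i i
      = ∑ i ∈ Finset.univ.filter (fun i => hS.eigenvalues i < 0), hS.eigenvalues i * M i i
        + ∑ i ∈ Finset.univ.filter (fun i => ¬ hS.eigenvalues i < 0),
            hS.eigenvalues i * M i i :=
    (Finset.sum_filter_add_sum_filter_not _ _ _).symm
  rw [hsplit]
  have h1 : ∑ i ∈ Finset.univ.filter (fun i => hS.eigenvalues i < 0), xbar * hS.eigenvalues i
      ≤ ∑ i ∈ Finset.univ.filter (fun i => hS.eigenvalues i < 0), hS.eigenvalues i * M i i := by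
    apply Finset.sum_le_sum
    intro i hi
    rw [Finset.mem_filter] at hi
    rw [mul_comm xbar]
    exact mul_le_mul_of_nonpos_left (hMx i) hi.2.le
  have h2 : (0 : ℝ) ≤ ∑ i ∈ Finset.univ.filter (fun i => ¬ hS.eigenvalues i < 0),
      hS.eigenvalues i * M i i := by
    apply Finset.sum_nonneg
    intro i hi
    rw [Finset.mem_filter] at hi
    exact mul_nonneg (not_lt.mp hi.2) (hM0 i)
  linarith
end

section
/- Let Y ∈ R^{n×k} be entrywise nonnegative with Y^T Y = I_k and Y Y^T 1_n = 1_n. Then within each column the nonzero entries are all equal: if Y_{ij} ≠ 0 and Y_{hj} ≠ 0 then Y_{ij} = Y_{hj}. -/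
open Matrix

/-- If `Y ≥ 0`, `Yᵀ Y = I` and `Y Yᵀ 1 = 1`, then within each column the
nonzero entries are all equal. -/
theorem stmt2 {n k : ℕ} (Y : Matrix (Fin n) (Fin k) ℝ)
    (hnonneg : ∀ i j, 0 ≤ Y i j) (horth : Yᵀ * Y = 1)
    (hones : (Y * Yᵀ) *ᵥ (fun _ => (1 : ℝ)) = fun _ => (1 : ℝ)) :
    ∀ (i h : Fin n) (j : Fin k), Y i j ≠ 0 → Y h j ≠ 0 → Y i j = Y h j := by
  have key : ∀ (i : Fin n) (j : Fin k), Y i j ≠ 0 →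
      Y i j * (∑ h, Y h j) = 1 := by
    intro i j hij
    have hrow : ∀ m : Fin k, m ≠ j → Y i m = 0 := by
      intro m hm
      have h0 := congrFun (congrFun horth m) j
      simp [Matrix.mul_apply, Matrix.one_apply, hm, Matrix.transpose_apply] at h0
      have hterm := (Finset.sum_eq_zero_iff_of_nonneg
        (fun h _ => mul_nonneg (hnonneg h m) (hnonneg h j))).mp h0 i (Finset.mem_univ i)
      rcases mul_eq_zero.mp hterm with h | h
      · exact h
      · exact absurd h hij
    have h1 := congrFun hones i
    simp only [Matrix.mulVec, dotProduct, Matrix.mul_apply,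
      Matrix.transpose_apply, mul_one] at h1
    rw [Finset.sum_comm] at h1
    have h2 : ∀ m : Fin k, (∑ l, Y i m * Y l m) = Y i m * ∑ l, Y l m := by
      intro m; rw [Finset.mul_sum]
    simp only [h2] at h1
    rw [Finset.sum_eq_single j] at h1
    · exact h1
    · intro m _ hm; rw [hrow m hm, zero_mul]
    · intro hj; exact absurd (Finset.mem_univ j) hj
  intro i h j hij hhj
  have k1 := key i j hij
  have k2 := key h j hhj
  have hs : (∑ h, Y h j) ≠ 0 := by
    intro h0; rw [h0, mul_zero] at k1; norm_num at k1
  exact mul_right_cancel₀ hs (k1.trans k2.symm)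
end

section
/- Let Y ∈ R^{n×k} be entrywise nonnegative with Y^T Y = I_k and Y Y^T 1_n = 1_n. Then for each column j there is a nonempty set S_j ⊆ {1,...,n} with Y_{ij} = |S_j|^{-1/2} if i ∈ S_j and Y_{ij} = 0 otherwise, and the sets S_1,...,S_k partition {1,...,n}. -/
open Matrix Finset

/-- If `Y ≥ 0`, `Yᵀ Y = I` and `Y Yᵀ 1 = 1`, then the columns of `Y` are the
normalized indicator vectors of a partition of `{1,...,n}` into `k` nonempty sets. -/
theorem stmt3 {n k : ℕ} (Y : Matrix (Fin n) (Fin k) ℝ)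
    (hnonneg : ∀ i j, 0 ≤ Y i j) (horth : Yᵀ * Y = 1)
    (hones : (Y * Yᵀ) *ᵥ (fun _ => (1 : ℝ)) = fun _ => (1 : ℝ)) :
    ∃ S : Fin k → Finset (Fin n),
      (∀ j, (S j).Nonempty) ∧
      (∀ i : Fin n, ∃! j : Fin k, i ∈ S j) ∧
      (∀ (i : Fin n) (j : Fin k),
        (i ∈ S j → Y i j = 1 / Real.sqrt ((S j).card)) ∧ (i ∉ S j → Y i j = 0)) := by
  classical
  set c : Fin k → ℝ := fun j => ∑ m, Y m j with hc
  have hdiag : ∀ j, ∑ i, Y i j * Y i j = 1 := by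
    intro j
    have := congrFun (congrFun horth j) j
    simpa [Matrix.mul_apply, Matrix.transpose_apply, Matrix.one_apply] using this
  have hoff : ∀ j j', j ≠ j' → ∀ i, Y i j * Y i j' = 0 := by
    intro j j' hjj'
    have h0 : ∑ i, Y i j * Y i j' = 0 := by
      have := congrFun (congrFun horth j) j'
      simpa [Matrix.mul_apply, Matrix.transpose_apply, Matrix.one_apply, hjj'] using this
    have h1 := (Finset.sum_eq_zero_iff_of_nonneg
      (fun i _ => mul_nonneg (hnonneg i j) (hnonneg i j'))).mp h0
    intro i; exact h1 i (mem_univ i)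
  have hrow : ∀ i, ∑ j, Y i j * c j = 1 := by
    intro i
    have h := congrFun hones i
    have h2 : ∑ m, ∑ j, Y i j * Y m j = 1 := by
      simpa [Matrix.mulVec, dotProduct, Matrix.mul_apply,
        Matrix.transpose_apply] using h
    calc ∑ j, Y i j * c j = ∑ j, ∑ m, Y i j * Y m j := by
          simp [hc, Finset.mul_sum]
      _ = ∑ m, ∑ j, Y i j * Y m j := Finset.sum_comm
      _ = 1 := h2
  have huniq : ∀ i j j', Y i j ≠ 0 → Y i j' ≠ 0 → j = j' := by
    intro i j j' h h'
    by_contra hne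
    rcases mul_eq_zero.mp (hoff j j' hne i) with h0 | h0
    · exact h h0
    · exact h' h0
  have hval : ∀ i j, Y i j ≠ 0 → Y i j * c j = 1 := by
    intro i j hij
    have h := hrow i
    rwa [Finset.sum_eq_single j (fun j' _ hj' => by
      have hz : Y i j' = 0 := by
        by_contra hne; exact hj' (huniq i j' j hne hij)
      simp [hz]) (fun h => absurd (mem_univ j) h)] at h
  refine ⟨fun j => univ.filter (fun i => Y i j ≠ 0), ?_, ?_, ?_⟩
  · intro j
    by_contra hempty
    rw [Finset.not_nonempty_iff_eq_empty, Finset.filter_eq_empty_iff] at hempty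
    have : ∑ i, Y i j * Y i j = 0 := Finset.sum_eq_zero (fun i _ => by
      have := hempty (mem_univ i); push_neg at this; simp [this])
    rw [hdiag j] at this; norm_num at this
  · intro i
    have : ∃ j, Y i j ≠ 0 := by
      by_contra h
      push_neg at h
      have h1 := hrow i
      simp [h] at h1
    obtain ⟨j, hj⟩ := this
    refine ⟨j, by simp [hj], fun j' hj' => ?_⟩
    simp only [Finset.mem_filter] at hj'
    exact huniq i j' j hj'.2 hj
  · intro i j
    constructor
    · intro hi
      simp only [Finset.mem_filter] at hi
      have hij := hi.2
      -- c j > 0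
      have hcj : Y i j * c j = 1 := hval i j hij
      have hcpos : 0 < c j := by
        have hge : 0 ≤ c j := Finset.sum_nonneg (fun m _ => hnonneg m j)
        rcases lt_or_eq_of_le hge with h | h
        · exact h
        · exfalso; rw [← h] at hcj; simp at hcj
      have hYij : Y i j = 1 / c j := by
        field_simp at hcj ⊢
        linarith [hcj]
      -- all nonzero entries equal 1 / c j
      have hsum : ∑ m, Y m j * Y m j = ((univ.filter (fun m => Y m j ≠ 0)).card : ℝ) * (1 / c j * (1 / c j)) := by
        rw [← Finset.sum_filter_ne_zero (univ)]
        · rw [Finset.sum_congr rfl (fun m hm => by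
            simp only [Finset.mem_filter] at hm
            have hmz : Y m j ≠ 0 := fun h0 => hm.2 (by simp [h0])
            have := hval m j hmz
            have hm1 : Y m j = 1 / c j := by
              field_simp at this ⊢; linarith
            rw [hm1])]
          rw [Finset.sum_const, nsmul_eq_mul]
          have hfe : (univ.filter fun x => Y x j * Y x j ≠ 0) = univ.filter (fun m => Y m j ≠ 0) := by
            apply Finset.filter_congr
            intro m _
            simp [mul_self_ne_zero]
          rw [hfe]
      have hcard : ((univ.filter (fun m => Y m j ≠ 0)).card : ℝ) = c j * c j := by
        have h1 := hdiag j
        rw [hsum] at h1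
        field_simp at h1
        linarith
      have hsqrt : Real.sqrt ((univ.filter (fun m => Y m j ≠ 0)).card : ℝ) = c j := by
        rw [hcard, Real.sqrt_mul_self hcpos.le]
      rw [hYij, hsqrt]
    · intro hi
      simp only [Finset.mem_filter, mem_univ, true_and, not_not] at hi
      exact hi
end

section
/- Let Z be an (n̄+m̄)×(n̄+m̄) symmetric positive semidefinite matrix with nonnegative entries, written in block form Z = [[Z_UU, Z_UV],[Z_UV^T, Z_VV]] with Z_UU ∈ S^{n̄}, Z_VV ∈ S^{m̄}. Suppose Z_UU e_U = 1_{n̄} and Z_VV e_V = 1_{m̄} for entrywise positive integer vectors e_U ∈ R^{n̄}, e_V ∈ R^{m̄} with all entries ≥ 1. Let d_U = min_j (e_U)_j and d_V = min_j (e_V)_j. Then λ_max(Z) ≤ 1/d_U + 1/d_V. -/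
open Matrix Finset

lemma quad_bound {n : ℕ} (A : Matrix (Fin n) (Fin n) ℝ) (hnn : ∀ i j, 0 ≤ A i j)
    (hsym : ∀ i j, A i j = A j i) (B : ℝ) (hrs : ∀ i, ∑ j, A i j ≤ B)
    (u : Fin n → ℝ) : u ⬝ᵥ (A *ᵥ u) ≤ B * ∑ j, u j ^ 2 := by
  have h1 : u ⬝ᵥ (A *ᵥ u) = ∑ i, ∑ j, A i j * (u i * u j) := by
    simp [dotProduct, mulVec, Finset.mul_sum]
    congr 1; funext i; congr 1; funext j; ring
  have h2 : ∀ i j, A i j * (u i * u j) ≤ A i j * ((u i ^2 + u j ^2)/2) := by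
    intro i j
    apply mul_le_mul_of_nonneg_left _ (hnn i j)
    nlinarith [sq_nonneg (u i - u j)]
  have hS1 : ∑ i, ∑ j, A i j * u i ^ 2 ≤ B * ∑ j, u j ^ 2 := by
    rw [Finset.mul_sum]
    apply Finset.sum_le_sum
    intro i _
    rw [show ∑ j, A i j * u i ^2 = (∑ j, A i j) * u i ^2 by rw [Finset.sum_mul]]
    exact mul_le_mul_of_nonneg_right (hrs i) (sq_nonneg _)
  have hS2 : ∑ i, ∑ j, A i j * u j ^ 2 ≤ B * ∑ j, u j ^ 2 := by
    rw [Finset.sum_comm, Finset.mul_sum]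
    apply Finset.sum_le_sum
    intro j _
    rw [show ∑ i, A i j * u j ^2 = (∑ i, A i j) * u j ^2 by rw [Finset.sum_mul]]
    have : ∑ i, A i j = ∑ i, A j i := by
      apply Finset.sum_congr rfl; intro i _; exact hsym i j
    rw [this]
    exact mul_le_mul_of_nonneg_right (hrs j) (sq_nonneg _)
  calc u ⬝ᵥ (A *ᵥ u) = ∑ i, ∑ j, A i j * (u i * u j) := h1
    _ ≤ ∑ i, ∑ j, A i j * ((u i ^2 + u j ^2)/2) :=
        Finset.sum_le_sum fun i _ => Finset.sum_le_sum fun j _ => h2 i j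
    _ = ((∑ i, ∑ j, A i j * u i ^2) + (∑ i, ∑ j, A i j * u j ^2))/2 := by
        rw [← Finset.sum_add_distrib]
        rw [Finset.sum_div]
        apply Finset.sum_congr rfl; intro i _
        rw [← Finset.sum_add_distrib, Finset.sum_div]
        apply Finset.sum_congr rfl; intro j _; ring
    _ ≤ B * ∑ j, u j ^ 2 := by linarith

theorem stmt6 {nb mb : ℕ} (hn : 0 < nb) (hm : 0 < mb)
    (ZUU : Matrix (Fin nb) (Fin nb) ℝ) (ZVV : Matrix (Fin mb) (Fin mb) ℝ)
    (ZUV : Matrix (Fin nb) (Fin mb) ℝ)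
    (Z : Matrix (Fin nb ⊕ Fin mb) (Fin nb ⊕ Fin mb) ℝ)
    (hZ : Z = Matrix.fromBlocks ZUU ZUV ZUVᵀ ZVV)
    (hpsd : Z.PosSemidef) (hZnonneg : ∀ i j, 0 ≤ Z i j)
    (eU : Fin nb → ℝ) (eV : Fin mb → ℝ)
    (heUint : ∀ j, ∃ p : ℕ, eU j = p) (heVint : ∀ j, ∃ p : ℕ, eV j = p)
    (heU : ∀ j, 1 ≤ eU j) (heV : ∀ j, 1 ≤ eV j)
    (hrowU : ZUU *ᵥ eU = fun _ => (1 : ℝ))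
    (hrowV : ZVV *ᵥ eV = fun _ => (1 : ℝ))
    (dU dV : ℝ)
    (hdU : dU = (Finset.univ.image eU).min' (by simp [Finset.univ_nonempty_iff, Fin.pos_iff_nonempty.mp hn]))
    (hdV : dV = (Finset.univ.image eV).min' (by simp [Finset.univ_nonempty_iff, Fin.pos_iff_nonempty.mp hm])) :
    ∀ i, hpsd.1.eigenvalues i ≤ 1 / dU + 1 / dV := by
  intro i
  -- facts about dU, dV
  obtain ⟨jU, -, hjU⟩ := Finset.mem_image.mp (hdU ▸ Finset.min'_mem (Finset.univ.image eU) _)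
  obtain ⟨jV, -, hjV⟩ := Finset.mem_image.mp (hdV ▸ Finset.min'_mem (Finset.univ.image eV) _)
  have hdU1 : 1 ≤ dU := hjU ▸ heU jU
  have hdV1 : 1 ≤ dV := hjV ▸ heV jV
  have hdU0 : 0 < dU := lt_of_lt_of_le one_pos hdU1
  have hdV0 : 0 < dV := lt_of_lt_of_le one_pos hdV1
  have hdUle : ∀ j, dU ≤ eU j := fun j => hdU ▸ Finset.min'_le _ _ (Finset.mem_image_of_mem eU (Finset.mem_univ j))
  have hdVle : ∀ j, dV ≤ eV j := fun j => hdV ▸ Finset.min'_le _ _ (Finset.mem_image_of_mem eV (Finset.mem_univ j))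
  -- block entry facts
  have hAnn : ∀ a b, 0 ≤ ZUU a b := fun a b => by
    have := hZnonneg (Sum.inl a) (Sum.inl b); rwa [hZ] at this
  have hCnn : ∀ a b, 0 ≤ ZVV a b := fun a b => by
    have := hZnonneg (Sum.inr a) (Sum.inr b); rwa [hZ] at this
  have hherm := hpsd.1
  have hAsym : ∀ a b, ZUU a b = ZUU b a := by
    intro a b
    have := congrFun (congrFun hherm (Sum.inl a)) (Sum.inl b)
    simp [hZ, conjTranspose_apply] at this
    simpa [hZ] using this.symm
  have hCsym : ∀ a b, ZVV a b = ZVV b a := by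
    intro a b
    have := congrFun (congrFun hherm (Sum.inr a)) (Sum.inr b)
    simp [hZ, conjTranspose_apply] at this
    simpa [hZ] using this.symm
  -- row sum bounds
  have hrsU : ∀ a, ∑ j, ZUU a j ≤ 1 / dU := by
    intro a
    rw [le_div_iff₀ hdU0]
    have h1 : ∑ j, ZUU a j * eU j = 1 := by
      have := congrFun hrowU a
      simpa [mulVec, dotProduct] using this
    calc (∑ j, ZUU a j) * dU = ∑ j, ZUU a j * dU := by rw [Finset.sum_mul]
      _ ≤ ∑ j, ZUU a j * eU j :=
          Finset.sum_le_sum fun j _ => mul_le_mul_of_nonneg_left (hdUle j) (hAnn a j)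
      _ = 1 := h1
  have hrsV : ∀ a, ∑ j, ZVV a j ≤ 1 / dV := by
    intro a
    rw [le_div_iff₀ hdV0]
    have h1 : ∑ j, ZVV a j * eV j = 1 := by
      have := congrFun hrowV a
      simpa [mulVec, dotProduct] using this
    calc (∑ j, ZVV a j) * dV = ∑ j, ZVV a j * dV := by rw [Finset.sum_mul]
      _ ≤ ∑ j, ZVV a j * eV j :=
          Finset.sum_le_sum fun j _ => mul_le_mul_of_nonneg_left (hdVle j) (hCnn a j)
      _ = 1 := h1
  -- eigenvector
  set lam := hpsd.1.eigenvalues i with hlam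
  set x : (Fin nb ⊕ Fin mb) → ℝ := ⇑(hpsd.1.eigenvectorBasis i) with hx
  set u : Fin nb → ℝ := fun a => x (Sum.inl a) with hu
  set v : Fin mb → ℝ := fun a => x (Sum.inr a) with hv
  have hxelim : x = Sum.elim u v := by funext k; cases k <;> rfl
  have heig : Z *ᵥ x = lam • x := hpsd.1.mulVec_eigenvectorBasis i
  have hb1 : ‖hpsd.1.eigenvectorBasis i‖ = 1 := hpsd.1.eigenvectorBasis.orthonormal.1 i
  have hnorm : ∑ k, x k ^ 2 = 1 := by
    have h := congrArg (· ^ 2) hb1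
    rw [EuclideanSpace.norm_eq] at h
    simp only [Real.norm_eq_abs, sq_abs, one_pow] at h
    rwa [Real.sq_sqrt (by positivity)] at h
  -- quadratic forms
  set a := u ⬝ᵥ (ZUU *ᵥ u) with ha
  set c := v ⬝ᵥ (ZVV *ᵥ v) with hc
  set b1 := u ⬝ᵥ (ZUV *ᵥ v) with hb1'
  set b2 := v ⬝ᵥ (ZUVᵀ *ᵥ u) with hb2'
  have hps : ∀ (u' : Fin nb → ℝ) (v' : Fin mb → ℝ),
      0 ≤ u' ⬝ᵥ (ZUU *ᵥ u') + u' ⬝ᵥ (ZUV *ᵥ v') + v' ⬝ᵥ (ZUVᵀ *ᵥ u') + v' ⬝ᵥ (ZVV *ᵥ v') := by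
    intro u' v'
    have h := hpsd.dotProduct_mulVec_nonneg (Sum.elim u' v')
    rw [hZ] at h
    simp only [star_trivial, fromBlocks_mulVec, sumElim_dotProduct_sumElim,
      Sum.elim_comp_inl, Sum.elim_comp_inr, dotProduct_add, RCLike.re_to_real] at h
    linarith
  -- lam = a + b1 + b2 + c
  have hlameq : lam = a + b1 + b2 + c := by
    have h1 : x ⬝ᵥ (Z *ᵥ x) = lam := by
      rw [heig, dotProduct_smul, smul_eq_mul,
        show x ⬝ᵥ x = ∑ k, x k ^ 2 by simp [dotProduct, sq], hnorm, mul_one]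
    rw [← h1, hZ, hxelim]
    simp only [fromBlocks_mulVec, sumElim_dotProduct_sumElim,
      Sum.elim_comp_inl, Sum.elim_comp_inr, dotProduct_add]
    ring
  -- nonnegativity of a and c
  have ha0 : 0 ≤ a := by have := hps u 0; simpa using this
  have hc0 : 0 ≤ c := by have := hps 0 v; simpa using this
  -- cross bound
  have hcross : 0 ≤ dU^2 * a - dU*dV*b1 - dU*dV*b2 + dV^2 * c := by
    have := hps (dU • u) (-(dV • v))
    simp only [mulVec_smul, mulVec_neg, smul_dotProduct, dotProduct_smul, dotProduct_neg,
      neg_dotProduct, smul_eq_mul] at this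
    nlinarith [this]
  -- the per-block quadratic bounds
  set s := ∑ j, u j ^ 2 with hs
  set t := ∑ j, v j ^ 2 with ht
  have hst : s + t = 1 := by
    rw [← hnorm, Fintype.sum_sum_type]
  have haq : a ≤ (1/dU) * s := quad_bound ZUU hAnn hAsym (1/dU) hrsU u
  have hcq : c ≤ (1/dV) * t := quad_bound ZVV hCnn hCsym (1/dV) hrsV v
  have haq' : dU * a ≤ s := by
    have := mul_le_mul_of_nonneg_left haq (le_of_lt hdU0)
    rw [mul_comm] at this
    calc dU * a ≤ dU * ((1/dU) * s) := mul_le_mul_of_nonneg_left haq (le_of_lt hdU0)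
      _ = s := by field_simp
  have hcq' : dV * c ≤ t := by
    calc dV * c ≤ dV * ((1/dV) * t) := mul_le_mul_of_nonneg_left hcq (le_of_lt hdV0)
      _ = t := by field_simp
  have hs0 : 0 ≤ s := Finset.sum_nonneg fun j _ => sq_nonneg _
  have ht0 : 0 ≤ t := Finset.sum_nonneg fun j _ => sq_nonneg _
  -- final algebra
  have hkey : lam * (dU * dV) ≤ dU + dV := by
    rw [hlameq]
    nlinarith [mul_le_mul_of_nonneg_left haq' (by linarith : (0:ℝ) ≤ dU + dV),
      mul_le_mul_of_nonneg_left hcq' (by linarith : (0:ℝ) ≤ dU + dV), hcross, hst,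
      mul_nonneg (le_of_lt hdU0) ha0, mul_nonneg (le_of_lt hdV0) hc0]
  have hfin : lam ≤ (dU + dV) / (dU * dV) := by
    rw [le_div_iff₀ (by positivity)]
    exact hkey
  calc lam ≤ (dU + dV) / (dU * dV) := hfin
    _ = 1/dU + 1/dV := by field_simp; ring
end

section
/- Let Y ∈ R^{n×k} be entrywise nonnegative with Y^T Y = I_k and Y Y^T 1_n = 1_n, and set Z = Y Y^T. Then for all distinct indices i, j: Z_{ij} ≤ Z_{ii} (pair inequality), and for all distinct i, j, h: Z_{ij} + Z_{ih} ≤ Z_{ii} + Z_{jh} (triangle inequality). -/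
open Matrix

/-- If `Y ≥ 0`, `Yᵀ Y = I`, `Y Yᵀ 1 = 1` and `Z = Y Yᵀ`, then `Z` satisfies
the pair inequalities `Z_ij ≤ Z_ii` (i ≠ j) and the triangle inequalities
`Z_ij + Z_ih ≤ Z_ii + Z_jh` (i, j, h pairwise distinct). -/
theorem stmt11 {n k : ℕ} (Y : Matrix (Fin n) (Fin k) ℝ)
    (hnonneg : ∀ i j, 0 ≤ Y i j) (horth : Yᵀ * Y = 1)
    (hones : (Y * Yᵀ) *ᵥ (fun _ => (1 : ℝ)) = fun _ => (1 : ℝ))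
    (Z : Matrix (Fin n) (Fin n) ℝ) (hZ : Z = Y * Yᵀ) :
    (∀ i j : Fin n, i ≠ j → Z i j ≤ Z i i) ∧
    (∀ i j h : Fin n, i ≠ j → i ≠ h → j ≠ h → Z i j + Z i h ≤ Z i i + Z j h) := by
  subst hZ
  have hZa : ∀ i j, (Y * Yᵀ) i j = ∑ c, Y i c * Y j c := by
    intro i j
    simp [Matrix.mul_apply, Matrix.transpose_apply]
  have hZnn : ∀ i j, 0 ≤ (Y * Yᵀ) i j := by
    intro i j
    rw [hZa]
    exact Finset.sum_nonneg fun c _ => mul_nonneg (hnonneg i c) (hnonneg j c)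
  -- disjoint supports of columns
  have huniq : ∀ (i : Fin n) (c c' : Fin k), c ≠ c' → Y i c * Y i c' = 0 := by
    intro i c c' hcc
    have h0 : ∑ r, Y r c * Y r c' = 0 := by
      have := congrFun (congrFun horth c) c'
      simpa [Matrix.mul_apply, Matrix.transpose_apply, Matrix.one_apply, hcc] using this
    have := (Finset.sum_eq_zero_iff_of_nonneg
      (fun r _ => mul_nonneg (hnonneg r c) (hnonneg r c'))).mp h0
    exact this i (Finset.mem_univ i)
  have hzero : ∀ (i : Fin n) (c c' : Fin k), c ≠ c' → 0 < Y i c → Y i c' = 0 := by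
    intro i c c' hcc hpos
    have := huniq i c c' hcc
    rcases mul_eq_zero.mp this with h | h
    · exact absurd h (ne_of_gt hpos)
    · exact h
  -- row sums
  have hrow : ∀ i, ∑ c, Y i c * (∑ j, Y j c) = 1 := by
    intro i
    have := congrFun hones i
    simp only [Matrix.mulVec, dotProduct, mul_one] at this
    calc ∑ c, Y i c * (∑ j, Y j c) = ∑ c, ∑ j, Y i c * Y j c := by
          simp [Finset.mul_sum]
      _ = ∑ j, ∑ c, Y i c * Y j c := Finset.sum_comm
      _ = ∑ j, (Y * Yᵀ) i j := by simp [hZa]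
      _ = 1 := this
  have hval : ∀ (i : Fin n) (c : Fin k), 0 < Y i c → Y i c * (∑ j, Y j c) = 1 := by
    intro i c hpos
    have := hrow i
    rwa [Finset.sum_eq_single c
      (fun c' _ hcc => by rw [hzero i c c' (Ne.symm hcc) hpos, zero_mul])
      (fun habs => absurd (Finset.mem_univ c) habs)] at this
  have hB : ∀ (i j : Fin n) (c : Fin k), 0 < Y i c → 0 < Y j c → Y i c = Y j c := by
    intro i j c hi hj
    have h1 := hval i c hi
    have h2 := hval j c hj
    have hs : (∑ r, Y r c) ≠ 0 := by
      intro h0; rw [h0, mul_zero] at h1; norm_num at h1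
    exact mul_right_cancel₀ hs (h1.trans h2.symm)
  have hZsingle : ∀ (i j : Fin n) (c : Fin k), 0 < Y i c →
      (Y * Yᵀ) i j = Y i c * Y j c := by
    intro i j c hpos
    rw [hZa]
    exact Finset.sum_eq_single c
      (fun c' _ hcc => by rw [hzero i c c' (Ne.symm hcc) hpos, zero_mul])
      (fun habs => absurd (Finset.mem_univ c) habs)
  -- extract a shared positive column from a positive entry
  have hcol : ∀ i j : Fin n, 0 < (Y * Yᵀ) i j →
      ∃ c, 0 < Y i c ∧ 0 < Y j c := by
    intro i j hpos
    rw [hZa] at hpos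
    obtain ⟨c, hc⟩ : ∃ c, 0 < Y i c * Y j c := by
      by_contra hcon
      push_neg at hcon
      have : ∑ c, Y i c * Y j c ≤ 0 := Finset.sum_nonpos fun c _ => hcon c
      linarith
    refine ⟨c, ?_, ?_⟩
    · rcases (hnonneg i c).eq_or_lt with h | h
      · rw [← h, zero_mul] at hc; linarith
      · exact h
    · rcases (hnonneg j c).eq_or_lt with h | h
      · rw [← h, mul_zero] at hc; linarith
      · exact h
  have keyeq : ∀ i j : Fin n, 0 < (Y * Yᵀ) i j → (Y * Yᵀ) i j = (Y * Yᵀ) i i := by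
    intro i j hpos
    obtain ⟨c, hic, hjc⟩ := hcol i j hpos
    rw [hZsingle i j c hic, hZsingle i i c hic, hB i j c hic hjc]
  constructor
  · intro i j _
    rcases (hZnn i j).eq_or_lt with h | h
    · rw [← h]; exact hZnn i i
    · exact le_of_eq (keyeq i j h)
  · intro i j l _ _ _
    rcases (hZnn i j).eq_or_lt with h1 | h1
    · rcases (hZnn i l).eq_or_lt with h2 | h2
      · rw [← h1, ← h2]
        have := hZnn i i
        have := hZnn j l
        linarith
      · rw [← h1, keyeq i l h2]
        have := hZnn j l
        linarith
    · rcases (hZnn i l).eq_or_lt with h2 | h2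
      · rw [← h2, keyeq i j h1]
        have := hZnn j l
        linarith
      · -- both positive: share the same column c in row i
        obtain ⟨c, hic, hjc⟩ := hcol i j h1
        obtain ⟨c', hic', hlc'⟩ := hcol i l h2
        have hcc : c = c' := by
          by_contra hne
          have := huniq i c c' hne
          nlinarith
        subst hcc
        have hjl : Y j c * Y l c ≤ (Y * Yᵀ) j l := by
          rw [hZa]
          exact Finset.single_le_sum
            (fun c' _ => mul_nonneg (hnonneg j c') (hnonneg l c')) (Finset.mem_univ c)
        rw [hZsingle i j c hic, hZsingle i l c hic, hZsingle i i c hic,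
          hB i j c hic hjc]
        linarith
end

section
/- Let T ∈ {0,1}^{n̄×n} be a must-link matrix (each column has exactly one 1, rows nonzero), C = T T^T, e = T 1_n. Let Y ∈ R^{n×k} satisfy Y^T Y = I_k, Y Y^T 1_n = 1_n, Y ≥ 0, and suppose Y = T^T C^{-1} T Y (Y is constant on components). Define Ȳ = C^{-1} T Y. Then Ȳ^T Diag(e) Ȳ = I_k, Ȳ Ȳ^T e = 1_{n̄}, and Ȳ ≥ 0. -/
open Matrix

/-- Conversely, from a feasible solution `Y` of the original problem that is
constant on components, `Ȳ = C⁻¹ T Y` is feasible for the aggregated problem. -/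
theorem stmt15 {nb n k : ℕ} (T : Matrix (Fin nb) (Fin n) ℝ)
    (hbin : ∀ i j, T i j = 0 ∨ T i j = 1)
    (hcol : ∀ j : Fin n, ∃! i : Fin nb, T i j = 1)
    (hrow : ∀ i : Fin nb, ∃ j : Fin n, T i j = 1)
    (C : Matrix (Fin nb) (Fin nb) ℝ) (hC : C = T * Tᵀ)
    (e : Fin nb → ℝ) (he : e = T *ᵥ (fun _ => (1 : ℝ)))
    (Y : Matrix (Fin n) (Fin k) ℝ)
    (horth : Yᵀ * Y = 1)
    (hones : (Y * Yᵀ) *ᵥ (fun _ => (1 : ℝ)) = fun _ => (1 : ℝ))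
    (hnonneg : ∀ i j, 0 ≤ Y i j)
    (hconst : Y = Tᵀ * C⁻¹ * T * Y)
    (Ybar : Matrix (Fin nb) (Fin k) ℝ) (hYbar : Ybar = C⁻¹ * T * Y) :
    Ybarᵀ * Matrix.diagonal e * Ybar = 1 ∧
    (Ybar * Ybarᵀ) *ᵥ e = (fun _ => (1 : ℝ)) ∧
    ∀ i j, 0 ≤ Ybar i j := by
  have hTnn : ∀ i j, (0:ℝ) ≤ T i j := fun i j => by
    rcases hbin i j with h | h <;> rw [h] <;> norm_num
  -- C is the diagonal matrix with entries e
  have hCdiag : C = diagonal e := by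
    rw [hC]
    ext i j
    by_cases hij : i = j
    · subst hij
      simp only [diagonal_apply_eq, he, mul_apply, transpose_apply, mulVec,
        dotProduct]
      refine Finset.sum_congr rfl fun l _ => ?_
      rcases hbin i l with h | h <;> simp [h]
    · simp only [diagonal_apply_ne _ hij, mul_apply, transpose_apply]
      refine Finset.sum_eq_zero fun l _ => ?_
      rcases hbin i l with h | h
      · simp [h]
      · rcases hbin j l with h' | h'
        · simp [h']
        · exact absurd ((hcol l).unique h h') hij
  -- entries of e are positive
  have hepos : ∀ i, 0 < e i := by
    intro i
    obtain ⟨j, hj⟩ := hrow i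
    have : (1:ℝ) ≤ e i := by
      rw [he]
      simp only [mulVec, dotProduct, mul_one]
      calc (1:ℝ) = T i j := hj.symm
        _ ≤ ∑ l, T i l := Finset.single_le_sum (fun l _ => hTnn i l) (Finset.mem_univ j)
    linarith
  have hene : ∀ i, e i ≠ 0 := fun i => (hepos i).ne'
  -- inverse of C
  have hCinv : C⁻¹ = diagonal (fun i => (e i)⁻¹) := by
    rw [hCdiag]
    apply inv_eq_right_inv
    rw [diagonal_mul_diagonal]
    convert diagonal_one
    exact mul_inv_cancel₀ (hene _)
  have hdet : IsUnit C.det := by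
    rw [hCdiag]
    apply isUnit_iff_ne_zero.mpr
    rw [det_diagonal]
    exact Finset.prod_ne_zero_iff.mpr fun i _ => hene i
  -- C⁻¹ symmetric
  have hCinvT : (C⁻¹)ᵀ = C⁻¹ := by
    rw [hCinv, diagonal_transpose]
  -- transposed version of hconst
  have hconstT : Yᵀ * Tᵀ * C⁻¹ * T = Yᵀ := by
    have h := congrArg transpose hconst
    simp only [transpose_mul, transpose_transpose, hCinvT] at h
    rw [Matrix.mul_assoc, Matrix.mul_assoc]
    exact h.symm
  refine ⟨?_, ?_, ?_⟩
  · -- orthogonality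
    calc Ybarᵀ * diagonal e * Ybar
        = Yᵀ * Tᵀ * C⁻¹ * (C * (C⁻¹ * (T * Y))) := by
          rw [hYbar, ← hCdiag]
          simp only [transpose_mul, transpose_transpose, hCinvT, Matrix.mul_assoc]
      _ = Yᵀ * Tᵀ * C⁻¹ * (T * Y) := by
          rw [Matrix.mul_nonsing_inv_cancel_left _ _ hdet]
      _ = (Yᵀ * Tᵀ * C⁻¹ * T) * Y := by simp only [Matrix.mul_assoc]
      _ = Yᵀ * Y := by rw [hconstT]
      _ = 1 := horth
  · -- row sums
    have key : Ybar * Ybarᵀ * T = C⁻¹ * T * (Y * Yᵀ) := by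
      calc Ybar * Ybarᵀ * T
          = C⁻¹ * T * (Y * (Yᵀ * Tᵀ * C⁻¹ * T)) := by
            rw [hYbar]
            simp only [transpose_mul, transpose_transpose, hCinvT, Matrix.mul_assoc]
        _ = C⁻¹ * T * (Y * Yᵀ) := by rw [hconstT]
    calc (Ybar * Ybarᵀ) *ᵥ e
        = (Ybar * Ybarᵀ) *ᵥ (T *ᵥ fun _ => (1:ℝ)) := by rw [he]
      _ = (Ybar * Ybarᵀ * T) *ᵥ (fun _ => (1:ℝ)) := mulVec_mulVec _ (Ybar * Ybarᵀ) T
      _ = (C⁻¹ * T * (Y * Yᵀ)) *ᵥ (fun _ => (1:ℝ)) := by rw [key]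
      _ = (C⁻¹ * T) *ᵥ ((Y * Yᵀ) *ᵥ (fun _ => (1:ℝ))) := (mulVec_mulVec _ (C⁻¹ * T) (Y * Yᵀ)).symm
      _ = (C⁻¹ * T) *ᵥ (fun _ => (1:ℝ)) := by rw [hones]
      _ = C⁻¹ *ᵥ (T *ᵥ (fun _ => (1:ℝ))) := (mulVec_mulVec _ C⁻¹ T).symm
      _ = C⁻¹ *ᵥ e := by rw [he]
      _ = (fun _ => (1:ℝ)) := by
          rw [hCinv]
          funext i
          simp [mulVec_diagonal, inv_mul_cancel₀ (hene i)]
  · -- nonnegativity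
    intro i j
    rw [hYbar, hCinv, Matrix.mul_assoc, diagonal_mul]
    have : (0:ℝ) ≤ (T * Y) i j := by
      rw [mul_apply]
      exact Finset.sum_nonneg fun l _ => mul_nonneg (hTnn i l) (hnonneg l j)
    exact mul_nonneg (inv_nonneg.mpr (hepos i).le) this
end

section
/- Let Y ∈ R^{n×k} be entrywise nonnegative with Y^T Y = I_k and Y Y^T 1_n = 1_n, and set Z = Y Y^T. Then for every pair i, j: Z_{ij} · (Z_{ii} − Z_{ij}) = 0; that is, either Z_{ij} = 0 or Z_{ij} = Z_{ii}. -/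
open Matrix

/-- If `Y ≥ 0`, `Yᵀ Y = I`, `Y Yᵀ 1 = 1` and `Z = Y Yᵀ`, then for all `i, j`:
`Z_ij (Z_ii − Z_ij) = 0`. -/
theorem stmt17 {n k : ℕ} (Y : Matrix (Fin n) (Fin k) ℝ)
    (hnonneg : ∀ i j, 0 ≤ Y i j) (horth : Yᵀ * Y = 1)
    (hones : (Y * Yᵀ) *ᵥ (fun _ => (1 : ℝ)) = fun _ => (1 : ℝ))
    (Z : Matrix (Fin n) (Fin n) ℝ) (hZ : Z = Y * Yᵀ) :
    ∀ i j : Fin n, Z i j * (Z i i - Z i j) = 0 := by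
  -- Step 1: each row of Y has at most one nonzero entry.
  have hdisj : ∀ (c d : Fin k), c ≠ d → ∀ i, Y i c * Y i d = 0 := by
    intro c d hcd i
    have h0 : ∑ i, Y i c * Y i d = 0 := by
      have := congrFun (congrFun horth c) d
      simpa [Matrix.mul_apply, Matrix.transpose_apply, Matrix.one_apply, hcd] using this
    have hnn : ∀ i ∈ Finset.univ, 0 ≤ Y i c * Y i d := fun i _ =>
      mul_nonneg (hnonneg i c) (hnonneg i d)
    exact (Finset.sum_eq_zero_iff_of_nonneg hnn).mp h0 i (Finset.mem_univ i)
  -- Step 2: row condition ∑ c, Y i c * s c = 1 where s c = column sum.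
  have hrow : ∀ i, ∑ c, Y i c * (∑ j, Y j c) = 1 := by
    intro i
    have := congrFun hones i
    simp only [Matrix.mulVec, dotProduct, Matrix.mul_apply,
      Matrix.transpose_apply, mul_one] at this
    rw [← this, Finset.sum_comm]
    simp [Finset.mul_sum]
  intro i j
  have hZij : Z i j = ∑ c, Y i c * Y j c := by
    simp [hZ, Matrix.mul_apply, Matrix.transpose_apply]
  have hZii : Z i i = ∑ c, Y i c * Y i c := by
    simp [hZ, Matrix.mul_apply, Matrix.transpose_apply]
  by_cases h0 : Z i j = 0
  · simp [h0]
  · -- there is a column c with Y i c ≠ 0 and Y j c ≠ 0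
    have : ∃ c, Y i c * Y j c ≠ 0 := by
      by_contra hc
      push_neg at hc
      exact h0 (by rw [hZij]; exact Finset.sum_eq_zero fun c _ => hc c)
    obtain ⟨c, hc⟩ := this
    have hic : Y i c ≠ 0 := fun h => hc (by simp [h])
    have hjc : Y j c ≠ 0 := fun h => hc (by simp [h])
    have hi0 : ∀ d, d ≠ c → Y i d = 0 := fun d hd => by
      have := hdisj d c hd i
      rcases mul_eq_zero.mp this with h | h
      · exact h
      · exact absurd h hic
    have hj0 : ∀ d, d ≠ c → Y j d = 0 := fun d hd => by
      have := hdisj d c hd j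
      rcases mul_eq_zero.mp this with h | h
      · exact h
      · exact absurd h hjc
    -- reduce sums to the single column c
    have hZij' : Z i j = Y i c * Y j c := by
      rw [hZij]
      exact Finset.sum_eq_single c (fun d _ hd => by rw [hi0 d hd, zero_mul])
        (fun h => absurd (Finset.mem_univ c) h)
    have hZii' : Z i i = Y i c * Y i c := by
      rw [hZii]
      exact Finset.sum_eq_single c (fun d _ hd => by rw [hi0 d hd, zero_mul])
        (fun h => absurd (Finset.mem_univ c) h)
    -- from the row condition, Y i c * s = 1 = Y j c * s with s > 0
    have hsi : Y i c * (∑ j', Y j' c) = 1 := by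
      rw [← hrow i]
      symm
      apply Finset.sum_eq_single c
      · intro d _ hd; rw [hi0 d hd, zero_mul]
      · intro h; exact absurd (Finset.mem_univ c) h
    have hsj : Y j c * (∑ j', Y j' c) = 1 := by
      rw [← hrow j]
      symm
      apply Finset.sum_eq_single c
      · intro d _ hd; rw [hj0 d hd, zero_mul]
      · intro h; exact absurd (Finset.mem_univ c) h
    have hs : (∑ j', Y j' c) ≠ 0 := fun h => by simp [h] at hsi
    have heq : Y i c = Y j c := by
      have := hsi.trans hsj.symm
      exact mul_right_cancel₀ hs this
    rw [hZij', hZii', heq]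
    ring
end
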